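/- Let G = (V,E) be a finite simple graph, let 0 < α ≤ 1 and 0 < ε ≤ 1, and let k ≤ |V|. Let S ⊆ V with |S| = k be a set of k vertices of largest degrees (d(u) ≥ d(w) for all u ∈ S, w ∈ V∖S), and let v₁ be a vertex of maximum degree in G (so v₁ ∈ S may be assumed, since S contains a vertex of maximum degree). If d(v₁) ≥ 2k²/(ε·α) + k, then 2k² ≤ ε·cov_α(S). -/

import Mathlib

open Finset

/-- Number of edges of `G` with both endpoints in `X`. -/
noncomputable def mIn {V : Type*} (G : SimpleGraph V) (X : Finset V) : ℕ :=
  {e ∈ G.edgeSet | ∀ v ∈ e, v ∈ X}.ncard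

/-- Number of edges of `G` with one endpoint in `X` and the other in `Y`. -/
noncomputable def mBtw {V : Type*} (G : SimpleGraph V) (X Y : Finset V) : ℕ :=
  {e ∈ G.edgeSet | ∃ u ∈ X, ∃ w ∈ Y, e = s(u, w)}.ncard

/-- `cov_α(S) = (1-α)·m(S) + α·m(S, V∖S)`. -/
noncomputable def cov {V : Type*} [Fintype V] [DecidableEq V] (G : SimpleGraph V) (α : ℝ)
    (S : Finset V) : ℝ :=
  (1 - α) * mIn G S + α * mBtw G S Sᶜ

theorem stmt5 {V : Type*} [Fintype V] [DecidableEq V] (G : SimpleGraph V)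
    [DecidableRel G.Adj] (α ε : ℝ) (hα0 : 0 < α) (hα1 : α ≤ 1)
    (hε0 : 0 < ε) (hε1 : ε ≤ 1)
    (k : ℕ) (hk : k ≤ Fintype.card V)
    (S : Finset V) (hScard : S.card = k)
    (hStop : ∀ u ∈ S, ∀ w ∉ S, G.degree w ≤ G.degree u)
    (v₁ : V) (hv₁max : ∀ w : V, G.degree w ≤ G.degree v₁) (hv₁S : v₁ ∈ S)
    (hdeg : (G.degree v₁ : ℝ) ≥ 2 * (k : ℝ) ^ 2 / (ε * α) + k) :
    2 * (k : ℝ) ^ 2 ≤ ε * cov G α S := by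
  classical
  set M : Set (Sym2 V) := {e ∈ G.edgeSet | ∃ u ∈ S, ∃ w ∈ Sᶜ, e = s(u, w)} with hM
  have hMcard : mBtw G S Sᶜ = M.toFinset.card := by
    simp [mBtw, hM, Set.ncard_eq_toFinset_card']
  have hT : (G.neighborFinset v₁ \ S).card ≤ mBtw G S Sᶜ := by
    rw [hMcard]
    apply Finset.card_le_card_of_injOn (fun w => s(v₁, w))
    · intro w hw
      rw [Finset.mem_coe, Finset.mem_sdiff, SimpleGraph.mem_neighborFinset] at hw
      simp only [Finset.mem_coe, Set.mem_toFinset, hM, Set.mem_setOf_eq]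
      exact ⟨G.mem_edgeSet.mpr hw.1, v₁, hv₁S, w, Finset.mem_compl.mpr hw.2, rfl⟩
    · intro a _ b _ hab
      exact Sym2.congr_right.mp hab
  have hdle : (G.degree v₁ : ℝ) ≤ (mBtw G S Sᶜ : ℝ) + k := by
    have h1 : G.degree v₁ ≤ (G.neighborFinset v₁ \ S).card + S.card := by
      rw [SimpleGraph.degree]
      exact Finset.card_le_card_sdiff_add_card
    have h2 : G.degree v₁ ≤ mBtw G S Sᶜ + k := by omega
    exact_mod_cast h2
  have hmB : 2 * (k : ℝ) ^ 2 / (ε * α) ≤ (mBtw G S Sᶜ : ℝ) := by linarith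
  have hεα : 0 < ε * α := mul_pos hε0 hα0
  have key : 2 * (k : ℝ) ^ 2 ≤ ε * α * (mBtw G S Sᶜ : ℝ) := by
    rw [div_le_iff₀ hεα] at hmB
    linarith
  have hmIn : (0 : ℝ) ≤ (1 - α) * (mIn G S : ℝ) :=
    mul_nonneg (by linarith) (Nat.cast_nonneg _)
  unfold cov
  nlinarith [key, hmIn]
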